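/- For every integer n > 3, the graph G_n is connected. -/

import Mathlib

/-- The graph `G_n` on permutations of `{1, …, n}`, with an edge between `λ` and `ν`
iff `λ i ≠ ν i` for every `i`. -/
def derangementGraph (n : ℕ) : SimpleGraph (Equiv.Perm (Fin n)) where
  Adj lam nu := lam ≠ nu ∧ ∀ i, lam i ≠ nu i
  symm := ⟨fun _ _ h => ⟨h.1.symm, fun i => (h.2 i).symm⟩⟩
  loopless := ⟨fun _ h => h.1 rfl⟩

/-- Left multiplication preserves reachability. -/
lemma derangementGraph.reach_mul_left {n : ℕ} (g : Equiv.Perm (Fin n))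
    {x y : Equiv.Perm (Fin n)} (h : (derangementGraph n).Reachable x y) :
    (derangementGraph n).Reachable (g * x) (g * y) := by
  exact h.map
    { toFun := fun z => g * z
      map_rel' := by
        rintro p q ⟨h1, h2⟩
        refine ⟨fun he => h1 (by simpa using mul_left_cancel he), fun i => ?_⟩
        simpa [Equiv.Perm.mul_apply] using fun hgi => h2 i (g.injective hgi) }

lemma derangementGraph.reach_swap {n : ℕ} (hn : 3 < n) (a b : Fin n)
    (lam : Equiv.Perm (Fin n)) :
    (derangementGraph n).Reachable lam (lam * Equiv.swap a b) := by
  haveI : NeZero n := ⟨by omega⟩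
  rcases eq_or_ne a b with rfl | hab
  · simp [Equiv.swap_self]
    exact SimpleGraph.Reachable.refl _
  have h1 : (1 : Fin n) ≠ 0 := by
    intro h
    have : 1 % n = 0 := congrArg Fin.val h
    rw [Nat.mod_eq_of_lt (by omega)] at this; omega
  have h2 : (2 : Fin n) ≠ 0 := by
    intro h
    have : 2 % n = 0 := congrArg Fin.val h
    rw [Nat.mod_eq_of_lt (by omega)] at this; omega
  have h3 : (3 : Fin n) ≠ 0 := by
    intro h
    have : 3 % n = 0 := congrArg Fin.val h
    rw [Nat.mod_eq_of_lt (by omega)] at this; omega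
  have h21 : (2 : Fin n) ≠ 1 := by
    intro h
    have : 2 % n = 1 % n := congrArg Fin.val h
    rw [Nat.mod_eq_of_lt (by omega : 2 < n), Nat.mod_eq_of_lt (by omega : 1 < n)] at this; omega
  have h12eq3 : (1 : Fin n) + 2 = 3 := by
    apply Fin.ext
    show (1 % n + 2 % n) % n = 3 % n
    rw [Nat.mod_eq_of_lt (by omega : 1 < n), Nat.mod_eq_of_lt (by omega : 2 < n)]
  -- choose the shift c
  obtain ⟨c, hc0, hca, hcb⟩ : ∃ c : Fin n, c ≠ 0 ∧ a + c ≠ b ∧ b + c ≠ a := by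
    by_cases hA : a + 1 = b
    · refine ⟨2, h2, ?_, ?_⟩
      · rw [← hA]
        exact fun h => h21 (add_left_cancel h)
      · rw [← hA]
        intro h
        rw [add_assoc, h12eq3, add_eq_left] at h
        exact h3 h
    · by_cases hB : b + 1 = a
      · refine ⟨2, h2, ?_, ?_⟩
        · rw [← hB]
          intro h
          rw [add_assoc, h12eq3, add_eq_left] at h
          exact h3 h
        · rw [← hB]
          exact fun h => h21 (add_left_cancel h)
      · exact ⟨1, h1, hA, hB⟩
  set d : Equiv.Perm (Fin n) := Equiv.addRight c with hd
  have hdi : ∀ i : Fin n, d i = i + c := fun i => rfl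
  have hfix : ∀ i : Fin n, i + c ≠ i := by
    intro i h
    rw [add_eq_left] at h
    exact hc0 h
  have adj1 : (derangementGraph n).Adj lam (lam * d) := by
    constructor
    · intro h
      have := congrArg (fun p : Equiv.Perm (Fin n) => p 0) h
      simp only [Equiv.Perm.mul_apply, hdi] at this
      exact hfix 0 (lam.injective this).symm
    · intro i
      simp only [Equiv.Perm.mul_apply, hdi]
      exact fun h => hfix i (lam.injective h).symm
  have adj2 : (derangementGraph n).Adj (lam * d) (lam * Equiv.swap a b) := by
    have key : ∀ i : Fin n, i + c ≠ Equiv.swap a b i := by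
      intro i
      rcases eq_or_ne i a with rfl | hia
      · rw [Equiv.swap_apply_left]; exact hca
      rcases eq_or_ne i b with rfl | hib
      · rw [Equiv.swap_apply_right]; exact hcb
      · rw [Equiv.swap_apply_of_ne_of_ne hia hib]; exact hfix i
    constructor
    · intro h
      have := congrArg (fun p : Equiv.Perm (Fin n) => p 0) h
      simp only [Equiv.Perm.mul_apply, hdi] at this
      exact key 0 (lam.injective this)
    · intro i
      simp only [Equiv.Perm.mul_apply, hdi]
      exact fun h => key i (lam.injective h)
  exact (adj1.reachable).trans adj2.reachable

/-- For every `n > 3`, the graph `G_n` is connected. -/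
theorem derangementGraph_connected (n : ℕ) (hn : 3 < n) :
    (derangementGraph n).Connected := by
  have key : ∀ σ : Equiv.Perm (Fin n), (derangementGraph n).Reachable 1 σ := by
    intro σ
    have hσ : σ ∈ Subgroup.closure {τ : Equiv.Perm (Fin n) | τ.IsSwap} := by
      rw [Equiv.Perm.closure_isSwap]; trivial
    induction hσ using Subgroup.closure_induction with
    | mem τ hτ =>
        obtain ⟨a, b, -, rfl⟩ := hτ
        simpa using derangementGraph.reach_swap hn a b 1
    | one => exact SimpleGraph.Reachable.refl _
    | mul σ τ _ _ ihσ ihτ =>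
        exact ihσ.trans (by simpa using derangementGraph.reach_mul_left σ ihτ)
    | inv σ _ ihσ =>
        have := derangementGraph.reach_mul_left σ⁻¹ ihσ
        simpa using this.symm
  constructor
  intro lam nu
  have := derangementGraph.reach_mul_left lam (key (lam⁻¹ * nu))
  simpa [← mul_assoc] using this
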